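/- Let r ≥ 2, k ≥ 1, R ∈ ℂ[z] nonzero, P(z) = z^r·R(z^k), Q(z) = z^r·R(z)^k, and n ≥ 1. If z₀ ∈ ℂ satisfies P^{∘n}(z₀) = z₀ and z₀ ≠ 0, then Q^{∘n}(z₀^k) = z₀^k and (Q^{∘n})'(z₀^k) = (P^{∘n})'(z₀). -/

import Mathlib

open Polynomial

/-- The `n`-th compositional iterate of a polynomial. -/
noncomputable def polyIter (φ : Polynomial ℂ) (n : ℕ) : Polynomial ℂ :=
  (fun q => φ.comp q)^[n] Polynomial.X

lemma polyIter_succ (φ : Polynomial ℂ) (n : ℕ) :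
    polyIter φ (n + 1) = φ.comp (polyIter φ n) := by
  simp [polyIter, Function.iterate_succ_apply']

lemma key (r k : ℕ) (R : Polynomial ℂ) (n : ℕ) :
    (polyIter (X ^ r * R ^ k) n).comp (X ^ k)
      = (polyIter (X ^ r * R.comp (X ^ k)) n) ^ k := by
  induction n with
  | zero => simp [polyIter]
  | succ n ih =>
      rw [polyIter_succ, polyIter_succ, comp_assoc, ih]
      simp [mul_comp, pow_comp, X_comp, mul_pow, ← pow_mul, comp_assoc,
        Nat.mul_comm r k]

/-- If `z₀ ≠ 0` is a fixed point of `P^{∘n}`, then `z₀^k` is a fixed point of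
`Q^{∘n}` with the same multiplier. Here `P(z) = z^r·R(z^k)`, `Q(z) = z^r·R(z)^k`. -/
theorem stmt12 (r k : ℕ) (hr : 2 ≤ r) (hk : 1 ≤ k) (R : Polynomial ℂ) (hR : R ≠ 0)
    (n : ℕ) (hn : 1 ≤ n) (z₀ : ℂ) (hz₀ : z₀ ≠ 0)
    (hfix : (polyIter (X ^ r * R.comp (X ^ k)) n).eval z₀ = z₀) :
    (polyIter (X ^ r * R ^ k) n).eval (z₀ ^ k) = z₀ ^ k ∧
    (Polynomial.derivative (polyIter (X ^ r * R ^ k) n)).eval (z₀ ^ k)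
      = (Polynomial.derivative (polyIter (X ^ r * R.comp (X ^ k)) n)).eval z₀ := by
  set P := X ^ r * R.comp (X ^ k)
  set Q := X ^ r * R ^ k
  have hkey : (polyIter Q n).comp (X ^ k) = (polyIter P n) ^ k := key r k R n
  have h1 : (polyIter Q n).eval (z₀ ^ k) = z₀ ^ k := by
    have := congrArg (Polynomial.eval z₀) hkey
    simpa [eval_comp, hfix] using this
  refine ⟨h1, ?_⟩
  have hd := congrArg (Polynomial.eval z₀) (congrArg Polynomial.derivative hkey)
  rw [derivative_comp] at hd
  simp only [derivative_pow, derivative_X, mul_one, eval_mul, eval_comp, eval_pow,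
    eval_natCast, eval_C, eval_X, hfix] at hd
  have hne : (k : ℂ) * z₀ ^ (k - 1) ≠ 0 := by
    have : (k : ℂ) ≠ 0 := Nat.cast_ne_zero.mpr (by omega)
    exact mul_ne_zero this (pow_ne_zero _ hz₀)
  apply mul_left_cancel₀ hne
  linear_combination hd
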